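/- Let R ∈ ℂ^{m×n}, let b ∈ ℂ^n, let 𝒮 denote the support of b (the set of indices of its non-zero entries), and set y = R b. Assume that the columns of R indexed by 𝒮 are linearly independent, and that there exists a vector v in the row space of R (i.e., v = R^H q for some q ∈ ℂ^m) such that v_i = b_i/|b_i| for all i ∈ 𝒮 and |v_i| < 1 for all i ∉ 𝒮. Then b is the unique minimizer of the program: minimize ‖b̃‖₁ subject to R b̃ = y. -/

import Mathlib

open Complex Matrix

/-- Existence of a dual certificate in the row space of `R` (together with linear
independence of the columns of `R` indexed by the support of `b`) implies that `b` is
the unique minimizer of `ℓ₁`-minimization subject to `R b̃ = R b`. -/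
theorem stmt5 (m n : ℕ) (R : Matrix (Fin m) (Fin n) ℂ) (b : Fin n → ℂ)
    (y : Fin m → ℂ) (hy : y = R.mulVec b)
    (hli : LinearIndependent ℂ (fun i : {i : Fin n // b i ≠ 0} => R.transpose i.1))
    (q : Fin m → ℂ) (v : Fin n → ℂ) (hv : v = R.conjTranspose.mulVec q)
    (hsign : ∀ i, b i ≠ 0 → v i = b i / (‖b i‖ : ℂ))
    (hlt : ∀ i, b i = 0 → ‖v i‖ < 1) :
    ∀ b' : Fin n → ℂ, R.mulVec b' = y → b' ≠ b →
      ∑ i, ‖b i‖ < ∑ i, ‖b' i‖ := by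
  classical
  intro b' hb' hne
  set h : Fin n → ℂ := b' - b with hhdef
  have hRh : R.mulVec h = 0 := by
    simp [hhdef, Matrix.mulVec_sub, hb', hy]
  -- orthogonality of the certificate to the kernel direction
  have hvh : ∑ i, (starRingEnd ℂ) (v i) * h i = 0 := by
    have e1 : star v ⬝ᵥ h = star q ⬝ᵥ R.mulVec h := by
      rw [hv, Matrix.star_mulVec, Matrix.conjTranspose_conjTranspose,
        Matrix.dotProduct_mulVec]
    simpa [dotProduct, hRh] using e1
  have hre : ∑ i, ((starRingEnd ℂ) (v i) * h i).re = 0 := by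
    have := congrArg Complex.re hvh
    simpa [Complex.re_sum] using this
  -- per-index inequalities
  have hle : ∀ i, ‖b i‖ + ((starRingEnd ℂ) (v i) * h i).re
      ≤ ‖b' i‖ := by
    intro i
    by_cases hbi : b i = 0
    · have hhi : h i = b' i := by simp [hhdef, hbi]
      rw [hbi, hhi]
      simp only [norm_zero, zero_add]
      calc ((starRingEnd ℂ) (v i) * b' i).re
          ≤ ‖(starRingEnd ℂ) (v i) * b' i‖ := Complex.re_le_norm _
        _ = ‖v i‖ * ‖b' i‖ := by simp [_root_.map_mul]
        _ ≤ 1 * ‖b' i‖ := by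
            exact mul_le_mul_of_nonneg_right (le_of_lt (hlt i hbi))
              (norm_nonneg _)
        _ = ‖b' i‖ := one_mul _
    · have habs : (‖b i‖ : ℂ) ≠ 0 := by
        simp [Complex.ofReal_ne_zero, hbi]
      have hv1 : ‖v i‖ = 1 := by
        rw [hsign i hbi]
        rw [norm_div]
        simp [hbi]
      have hvb : (starRingEnd ℂ) (v i) * b i = (‖b i‖ : ℂ) := by
        rw [hsign i hbi]
        rw [map_div₀]
        have : (starRingEnd ℂ) ((‖b i‖ : ℂ)) = (‖b i‖ : ℂ) :=
          Complex.conj_ofReal _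
        rw [this, div_mul_eq_mul_div, Complex.conj_mul']
        rw [sq]
        field_simp
      have hhi : h i = b' i - b i := by simp [hhdef]
      rw [hhi, mul_sub]
      have : ((starRingEnd ℂ) (v i) * b' i - (starRingEnd ℂ) (v i) * b i).re
          = ((starRingEnd ℂ) (v i) * b' i).re - ‖b i‖ := by
        rw [Complex.sub_re, hvb, Complex.ofReal_re]
      rw [this]
      have hre' : ((starRingEnd ℂ) (v i) * b' i).re ≤ ‖b' i‖ := by
        calc ((starRingEnd ℂ) (v i) * b' i).re
            ≤ ‖(starRingEnd ℂ) (v i) * b' i‖ := Complex.re_le_norm _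
          _ = ‖v i‖ * ‖b' i‖ := by simp [_root_.map_mul]
          _ = ‖b' i‖ := by rw [hv1, one_mul]
      linarith
  -- there is an index off the support where b' is nonzero
  have hexists : ∃ j, b j = 0 ∧ b' j ≠ 0 := by
    by_contra hc
    push_neg at hc
    apply hne
    have hz : ∀ i, b i = 0 → h i = 0 := by
      intro i hi
      simp [hhdef, hc i hi, hi]
    have hzero : ∀ i : {i : Fin n // b i ≠ 0}, h i.1 = 0 := by
      apply Fintype.linearIndependent_iff.mp hli (fun i => h i.1)
      funext j
      have e1 : (∑ i : {i : Fin n // b i ≠ 0}, h i.1 • R.transpose i.1) j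
          = ∑ i : {i : Fin n // b i ≠ 0}, h i.1 * R j i.1 := by
        simp [Finset.sum_apply, Matrix.transpose_apply]
      have e2 : ∑ i : {i : Fin n // b i ≠ 0}, h i.1 * R j i.1
          = ∑ i ∈ Finset.univ.filter (fun i => b i ≠ 0), h i * R j i := by
        exact (Finset.sum_subtype (p := fun i => b i ≠ 0)
          (Finset.univ.filter (fun i => b i ≠ 0))
          (fun x => by simp) (fun i => h i * R j i)).symm
      have e3 : ∑ i ∈ Finset.univ.filter (fun i => b i ≠ 0), h i * R j i
          = ∑ i, h i * R j i := by
        apply Finset.sum_filter_of_ne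
        intro x _ hx
        intro hbx
        exact hx (by rw [hz x hbx, zero_mul])
      have e4 : ∑ i, h i * R j i = R.mulVec h j := by
        simp [Matrix.mulVec, dotProduct, mul_comm]
      rw [e1, e2, e3, e4, hRh]
    have hh0 : h = 0 := by
      funext i
      by_cases hi : b i = 0
      · exact hz i hi
      · exact hzero ⟨i, hi⟩
    have : b' - b = 0 := by rw [← hhdef]; exact hh0
    exact sub_eq_zero.mp this
  obtain ⟨j, hbj, hbj'⟩ := hexists
  have hstrict : ‖b j‖ + ((starRingEnd ℂ) (v j) * h j).re
      < ‖b' j‖ := by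
    have hhj : h j = b' j := by simp [hhdef, hbj]
    rw [hbj, hhj]
    simp only [norm_zero, zero_add]
    calc ((starRingEnd ℂ) (v j) * b' j).re
        ≤ ‖(starRingEnd ℂ) (v j) * b' j‖ := Complex.re_le_norm _
      _ = ‖v j‖ * ‖b' j‖ := by simp [_root_.map_mul]
      _ < 1 * ‖b' j‖ := by
          exact mul_lt_mul_of_pos_right (hlt j hbj)
            (norm_pos_iff.mpr hbj')
      _ = ‖b' j‖ := one_mul _
  calc ∑ i, ‖b i‖
      = ∑ i, (‖b i‖ + ((starRingEnd ℂ) (v i) * h i).re) := by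
        rw [Finset.sum_add_distrib, hre, add_zero]
    _ < ∑ i, ‖b' i‖ :=
        Finset.sum_lt_sum (fun i _ => hle i) ⟨j, Finset.mem_univ j, hstrict⟩
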